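/- Let N ≥ 1 and let (Q_i)_{i∈I} be a family of closed axis-parallel cubes in ℝ^N, Q_i = ∏_{j=1}^N [c_{i,j}, c_{i,j} + l_i] with side lengths l_i > 0, whose interiors are pairwise disjoint, and such that whenever i ≠ j and Q_i ∩ Q_j ≠ ∅, the side lengths satisfy l_j = l_i or l_j = 2·l_i or l_j = l_i/2. Then for every i ∈ I, the set { j ∈ I : j ≠ i and Q_i ∩ Q_j ≠ ∅ } is finite with at most 4^N − 2^N elements. -/
import Mathlib

open MeasureTheory Set
open scoped ENNReal

/-- Let `(Q i)` be a family of closed axis-parallel cubes in `ℝ^N` with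
side lengths `l i > 0`, whose interiors are pairwise disjoint, and such that the side
lengths of any two intersecting cubes agree up to a factor `2`. Then each cube meets at
most `4^N − 2^N` other cubes of the family. -/
theorem stmt18 (N : ℕ) (hN : 1 ≤ N) {I : Type*} (c : I → Fin N → ℝ) (l : I → ℝ)
    (hl : ∀ i, 0 < l i)
    (Q : I → Set (Fin N → ℝ))
    (hQ : ∀ i, Q i = Set.univ.pi fun j => Set.Icc (c i j) (c i j + l i))
    (hdisj : ∀ i j, i ≠ j →
      (Set.univ.pi fun j' => Set.Ioo (c i j') (c i j' + l i)) ∩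
        (Set.univ.pi fun j' => Set.Ioo (c j j') (c j j' + l j)) = ∅)
    (hside : ∀ i j, i ≠ j → (Q i ∩ Q j).Nonempty →
      l j = l i ∨ l j = 2 * l i ∨ l j = l i / 2) :
    ∀ i, ({j | j ≠ i ∧ (Q i ∩ Q j).Nonempty}).Finite ∧
      ({j | j ≠ i ∧ (Q i ∩ Q j).Nonempty}).ncard ≤ 4 ^ N - 2 ^ N := by
  classical
  intro i
  set L := l i with hLdef
  have hL : 0 < L := hl i
  set S := {j | j ≠ i ∧ (Q i ∩ Q j).Nonempty} with hSdef
  -- choice of a point in each intersection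
  let x : I → (Fin N → ℝ) := fun j =>
    if h : (Q i ∩ Q j).Nonempty then h.some else fun _ => 0
  have hx : ∀ j ∈ S, x j ∈ Q i ∩ Q j := by
    intro j hj
    have h := hj.2
    simp only [x, dif_pos h]
    exact h.some_mem
  -- corners of the small boxes
  let a : I → Fin N → ℝ := fun j k => min (x j k) (c j k + l j - L / 2)
  let B : I → Set (Fin N → ℝ) := fun j => univ.pi fun k => Ioo (a j k) (a j k + L / 2)
  let IntQ : Set (Fin N → ℝ) := univ.pi fun k => Ioo (c i k) (c i k + L)
  let E : Set (Fin N → ℝ) := univ.pi fun k => Icc (c i k - L / 2) (c i k + L + L / 2)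
  have hlj : ∀ j ∈ S, L / 2 ≤ l j := by
    intro j hj
    rcases hside i j hj.1.symm hj.2 with h | h | h <;> rw [h] <;> linarith
  -- coordinates of x
  have hxQi : ∀ j ∈ S, ∀ k, c i k ≤ x j k ∧ x j k ≤ c i k + L := by
    intro j hj k
    have := (hx j hj).1
    rw [hQ i] at this
    exact this k (mem_univ k)
  have hxQj : ∀ j ∈ S, ∀ k, c j k ≤ x j k ∧ x j k ≤ c j k + l j := by
    intro j hj k
    have := (hx j hj).2
    rw [hQ j] at this
    exact this k (mem_univ k)
  -- a bounds
  have ha1 : ∀ j ∈ S, ∀ k, c j k ≤ a j k := by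
    intro j hj k
    have h1 := (hxQj j hj k).1
    have h2 := hlj j hj
    exact le_min h1 (by linarith)
  have ha2 : ∀ j ∈ S, ∀ k, a j k + L / 2 ≤ c j k + l j := by
    intro j hj k
    have : a j k ≤ c j k + l j - L / 2 := min_le_right _ _
    linarith
  have ha3 : ∀ j ∈ S, ∀ k, x j k - L / 2 ≤ a j k := by
    intro j hj k
    have h1 := (hxQj j hj k).2
    exact le_min (by linarith) (by linarith)
  have ha4 : ∀ j ∈ S, ∀ k, a j k ≤ x j k := fun j hj k => min_le_left _ _
  -- B j inside interior of Q j
  have hBQ : ∀ j ∈ S, B j ⊆ univ.pi fun k => Ioo (c j k) (c j k + l j) := by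
    intro j hj y hy k _
    have hyk := hy k (mem_univ k)
    have h1 := ha1 j hj k
    have h2 := ha2 j hj k
    exact ⟨lt_of_le_of_lt h1 hyk.1, lt_of_lt_of_le hyk.2 h2⟩
  -- B j inside E
  have hBE : ∀ j ∈ S, B j ⊆ E := by
    intro j hj y hy k _
    have hyk := hy k (mem_univ k)
    have h1 := ha3 j hj k
    have h2 := ha4 j hj k
    have h3 := hxQi j hj k
    constructor
    · have : c i k - L / 2 ≤ a j k := by linarith [h3.1]
      linarith [hyk.1]
    · have : a j k + L / 2 ≤ c i k + L + L / 2 := by linarith [h3.2]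
      linarith [hyk.2]
  have hIE : IntQ ⊆ E := by
    intro y hy k _
    have hyk := hy k (mem_univ k)
    constructor <;> [linarith [hyk.1]; linarith [hyk.2]]
  -- disjointness
  have hBB : ∀ j ∈ S, ∀ j' ∈ S, j ≠ j' → Disjoint (B j) (B j') := by
    intro j hj j' hj' hne
    have := hdisj j j' hne
    exact Set.disjoint_of_subset (hBQ j hj) (hBQ j' hj')
      (Set.disjoint_iff_inter_eq_empty.mpr this)
  have hBI : ∀ j ∈ S, Disjoint (B j) IntQ := by
    intro j hj
    have := hdisj j i hj.1
    exact Set.disjoint_of_subset (hBQ j hj) subset_rfl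
      (Set.disjoint_iff_inter_eq_empty.mpr this)
  -- measurability
  have hmB : ∀ j, MeasurableSet (B j) := fun j =>
    MeasurableSet.univ_pi fun k => measurableSet_Ioo
  have hmI : MeasurableSet IntQ := MeasurableSet.univ_pi fun k => measurableSet_Ioo
  -- volumes
  have hvB : ∀ j, volume (B j) = ENNReal.ofReal (L / 2) ^ N := by
    intro j
    rw [show B j = univ.pi fun k => Ioo (a j k) (a j k + L / 2) from rfl, volume_pi_pi]
    simp [Real.volume_Ioo]
  have hvI : volume IntQ = ENNReal.ofReal L ^ N := by
    rw [show IntQ = univ.pi fun k => Ioo (c i k) (c i k + L) from rfl, volume_pi_pi]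
    simp [Real.volume_Ioo]
  have hvE : volume E = ENNReal.ofReal (2 * L) ^ N := by
    rw [show E = univ.pi fun k => Icc (c i k - L / 2) (c i k + L + L / 2) from rfl,
      volume_pi_pi]
    have : ∀ k : Fin N, volume (Icc (c i k - L / 2) (c i k + L + L / 2))
        = ENNReal.ofReal (2 * L) := by
      intro k
      rw [Real.volume_Icc]
      congr 1
      ring
    simp only [this]
    simp
  -- the key cardinality bound for finite subsets
  have key : ∀ T : Finset I, (↑T : Set I) ⊆ S → T.card ≤ 4 ^ N - 2 ^ N := by
    intro T hT
    have hTS : ∀ j ∈ T, j ∈ S := fun j hj => hT hj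
    -- measure of union
    have hdisjU : Disjoint (⋃ j ∈ T, B j) IntQ := by
      exact Set.disjoint_iUnion₂_left.mpr fun j hj => hBI j (hTS j hj)
    have hUE : (⋃ j ∈ T, B j) ∪ IntQ ⊆ E := by
      apply Set.union_subset
      · exact Set.iUnion₂_subset fun j hj => hBE j (hTS j hj)
      · exact hIE
    have hmU : MeasurableSet (⋃ j ∈ T, B j) :=
      MeasurableSet.biUnion T.countable_toSet fun j _ => hmB j
    have step1 : volume ((⋃ j ∈ T, B j) ∪ IntQ) ≤ volume E :=
      measure_mono hUE
    have step2 : volume ((⋃ j ∈ T, B j) ∪ IntQ)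
        = volume (⋃ j ∈ T, B j) + volume IntQ :=
      measure_union hdisjU hmI
    have step3 : volume (⋃ j ∈ T, B j) = ∑ j ∈ T, volume (B j) := by
      apply measure_biUnion_finset
      · intro j hj j' hj' hne
        exact hBB j (hTS j hj) j' (hTS j' hj') hne
      · exact fun j _ => hmB j
    have step4 : ∑ j ∈ T, volume (B j) = T.card • ENNReal.ofReal (L / 2) ^ N := by
      rw [Finset.sum_congr rfl fun j _ => hvB j, Finset.sum_const]
    have main : (T.card : ℝ≥0∞) * ENNReal.ofReal (L / 2) ^ N + ENNReal.ofReal L ^ N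
        ≤ ENNReal.ofReal (2 * L) ^ N := by
      calc (T.card : ℝ≥0∞) * ENNReal.ofReal (L / 2) ^ N + ENNReal.ofReal L ^ N
          = volume ((⋃ j ∈ T, B j) ∪ IntQ) := by
            rw [step2, step3, step4, hvI, nsmul_eq_mul]
        _ ≤ volume E := step1
        _ = ENNReal.ofReal (2 * L) ^ N := hvE
    -- rewrite ofReal L and ofReal (2L) in terms of ofReal (L/2)
    have e1 : ENNReal.ofReal L = 2 * ENNReal.ofReal (L / 2) := by
      rw [show L = 2 * (L / 2) by ring, ENNReal.ofReal_mul (by norm_num)]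
      norm_num
    have e2 : ENNReal.ofReal (2 * L) = 4 * ENNReal.ofReal (L / 2) := by
      rw [show 2 * L = 4 * (L / 2) by ring, ENNReal.ofReal_mul (by norm_num)]
      norm_num
    rw [e1, e2, mul_pow, mul_pow] at main
    have hx0 : ENNReal.ofReal (L / 2) ^ N ≠ 0 := by
      apply pow_ne_zero
      simp [ENNReal.ofReal_eq_zero]
      linarith
    have hxt : ENNReal.ofReal (L / 2) ^ N ≠ ⊤ := by
      exact ENNReal.pow_ne_top ENNReal.ofReal_ne_top
    have main2 : ((T.card : ℝ≥0∞) + 2 ^ N) * ENNReal.ofReal (L / 2) ^ N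
        ≤ (4 : ℝ≥0∞) ^ N * ENNReal.ofReal (L / 2) ^ N := by
      rw [add_mul]
      exact main
    have main3 : (T.card : ℝ≥0∞) + 2 ^ N ≤ (4 : ℝ≥0∞) ^ N :=
      (ENNReal.mul_le_mul_iff_left hx0 hxt).mp main2
    have main4 : (T.card : ℕ) + 2 ^ N ≤ 4 ^ N := by
      have : ((T.card + 2 ^ N : ℕ) : ℝ≥0∞) ≤ ((4 ^ N : ℕ) : ℝ≥0∞) := by
        push_cast
        exact main3
      exact_mod_cast this
    omega
  -- finiteness
  have hfin : S.Finite := by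
    by_contra h
    have hinf : S.Infinite := h
    obtain ⟨T, hTsub, hTcard⟩ := hinf.exists_subset_card_eq (4 ^ N - 2 ^ N + 1)
    have := key T hTsub
    omega
  refine ⟨hfin, ?_⟩
  rw [Set.ncard_eq_toFinset_card _ hfin]
  exact key hfin.toFinset (by simp)
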